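/- Let d ≥ 1, L > 0, M > 0, ε > 0, let θ* ∈ ℝ^d with θ* ≠ 0, and let n ≥ 1. Let X_1, …, X_n be independent random vectors in ℝ^d, each of whose laws is absolutely continuous with respect to Lebesgue measure with density bounded almost everywhere by M and supported in the closed Euclidean ball of radius L. Then P(there exist i ≠ j with |⟨θ*, X_i⟩ − ⟨θ*, X_j⟩| ≤ ε) ≤ n² · M · (π^{(d−1)/2} / Γ((d+1)/2)) · L^{d−1} · (ε / ‖θ*‖₂). Equivalently, with probability at least 1 − n² M (π^{(d−1)/2}/Γ((d+1)/2)) L^{d−1} ε/‖θ*‖₂, every pair i ≠ j satisfies |⟨θ*, X_i⟩ − ⟨θ*, X_j⟩| > ε. -/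

import Mathlib

open MeasureTheory ENNReal

lemma slab_vol (k : ℕ) (θ : EuclideanSpace ℝ (Fin (k+1))) (hθ : θ ≠ 0) (c ε L : ℝ) :
    volume {x : EuclideanSpace ℝ (Fin (k+1)) | |(inner ℝ θ x : ℝ) - c| ≤ ε ∧ ‖x‖ ≤ L}
      ≤ ENNReal.ofReal (2 * ε / ‖θ‖)
        * volume (Metric.closedBall (0 : EuclideanSpace ℝ (Fin k)) L) := by
  have hθn : (0:ℝ) < ‖θ‖ := norm_pos_iff.2 hθ
  set u : EuclideanSpace ℝ (Fin (k+1)) := ‖θ‖⁻¹ • θ with hu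
  have hun : ‖u‖ = 1 := by
    rw [hu, norm_smul, norm_inv, norm_norm, inv_mul_cancel₀ hθn.ne']
  have horth : Orthonormal ℝ (({0} : Set (Fin (k+1))).restrict (fun _ => u)) := by
    refine ⟨fun i => hun, fun i j hij => absurd ?_ hij⟩
    have : i.1 = j.1 := by
      have h1 := i.2; have h2 := j.2
      simp only [Set.mem_singleton_iff] at h1 h2
      rw [h1, h2]
    exact Subtype.ext this
  obtain ⟨b, hb⟩ := horth.exists_orthonormalBasis_extension_of_card_eq (by simp)
  have hb0 : b 0 = u := hb 0 rfl
  set S := {x : EuclideanSpace ℝ (Fin (k+1)) | |(inner ℝ θ x : ℝ) - c| ≤ ε ∧ ‖x‖ ≤ L} with hSdef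
  have hS : MeasurableSet S := by
    rw [hSdef, Set.setOf_and]
    refine MeasurableSet.inter ?_ ?_
    · exact measurableSet_le (((continuous_const.inner continuous_id).sub
        continuous_const).abs).measurable measurable_const
    · exact measurableSet_le continuous_norm.measurable measurable_const
  set S' := {y : EuclideanSpace ℝ (Fin (k+1)) | |‖θ‖ * y 0 - c| ≤ ε ∧ ‖y‖ ≤ L} with hS'def
  have hinner : ∀ x : EuclideanSpace ℝ (Fin (k+1)), (inner ℝ θ x : ℝ) = ‖θ‖ * b.repr x 0 := by
    intro x
    rw [b.repr_apply_apply, hb0, hu, real_inner_smul_left]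
    field_simp
  have hpre : b.repr.symm ⁻¹' S = S' := by
    ext y
    simp only [hSdef, hS'def, Set.mem_preimage, Set.mem_setOf_eq, hinner,
      LinearIsometryEquiv.apply_symm_apply, LinearIsometryEquiv.norm_map]
  have step1 : volume S = volume S' := by
    rw [← hpre, b.measurePreserving_repr_symm.measure_preimage hS.nullMeasurableSet]
  -- to pi space
  have hS' : MeasurableSet S' := by
    rw [hS'def, Set.setOf_and]
    refine MeasurableSet.inter ?_ ?_
    · exact measurableSet_le (((continuous_mul_left _ |>.comp
        (continuous_apply (0 : Fin (k+1)) |>.comp (PiLp.continuous_ofLp (p := 2) (β := fun _ : Fin (k+1) => ℝ)))).sub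
        continuous_const).abs).measurable measurable_const
    · exact measurableSet_le continuous_norm.measurable measurable_const
  set e := (MeasurableEquiv.toLp 2 (Fin (k+1) → ℝ)).symm with he
  set A := e.symm ⁻¹' S' with hA
  have step2 : volume S' = (volume : Measure (Fin (k+1) → ℝ)) A := by
    rw [hA, (MeasurePreserving.symm _ (EuclideanSpace.volume_preserving_symm_measurableEquiv_toLp (Fin (k+1)))).measure_preimage
      hS'.nullMeasurableSet]
  have hAmeas : MeasurableSet A := e.symm.measurable hS'
  have step3 : (volume : Measure (Fin (k+1) → ℝ)) A
      = (volume : Measure (ℝ × (Fin k → ℝ)))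
        ((MeasurableEquiv.piFinSuccAbove (fun _ : Fin (k+1) => ℝ) 0).symm ⁻¹' A) := by
    rw [(MeasurePreserving.symm _ (MeasureTheory.volume_preserving_piFinSuccAbove (fun _ : Fin (k+1) => ℝ) 0)).measure_preimage
      hAmeas.nullMeasurableSet]
  set I := Set.Icc ((c - ε)/‖θ‖) ((c + ε)/‖θ‖) with hI
  set B := (MeasurableEquiv.toLp 2 (Fin k → ℝ)).symm.symm ⁻¹' (Metric.closedBall 0 L) with hB
  have hsub : (MeasurableEquiv.piFinSuccAbove (fun _ : Fin (k+1) => ℝ) 0).symm ⁻¹' A ⊆ I ×ˢ B := by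
    rintro ⟨t, w⟩ hmem
    simp only [hA, Set.mem_preimage] at hmem
    have hgv : (MeasurableEquiv.piFinSuccAbove (fun _ : Fin (k+1) => ℝ) 0).symm (t, w)
        = Fin.insertNth 0 t w := rfl
    rw [hgv] at hmem
    obtain ⟨h1, h2⟩ := hmem
    have hcoord : ∀ v : Fin (k+1) → ℝ, ∀ i, (e.symm v) i = v i := fun v i => rfl
    constructor
    · -- t ∈ I
      have ht : |‖θ‖ * t - c| ≤ ε := by
        have : (e.symm (Fin.insertNth 0 t w)) 0 = t := by
          rw [hcoord, Fin.insertNth_apply_same]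
        rwa [this] at h1
      rw [abs_le] at ht
      constructor
      · rw [div_le_iff₀ hθn]; linarith [ht.1]
      · rw [le_div_iff₀ hθn]; linarith [ht.2]
    · -- w ∈ B
      simp only [hB, Set.mem_preimage, Metric.mem_closedBall, dist_zero_right]
      have hn1 : ‖(MeasurableEquiv.toLp 2 (Fin k → ℝ)).symm.symm w‖
          = Real.sqrt (∑ j : Fin k, w j ^ 2) := by
        rw [EuclideanSpace.norm_eq]
        simp only [Real.norm_eq_abs, sq_abs]
        rfl
      have hn2 : ‖e.symm (Fin.insertNth 0 t w)‖
          = Real.sqrt (t ^ 2 + ∑ j : Fin k, w j ^ 2) := by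
        rw [EuclideanSpace.norm_eq]
        simp only [Real.norm_eq_abs, sq_abs]
        congr 1
        have hcg : ∑ i : Fin (k+1), (e.symm (Fin.insertNth 0 t w) i) ^ 2
            = ∑ i : Fin (k+1), (Fin.insertNth 0 t w i) ^ 2 := rfl
        rw [hcg, Fin.sum_univ_succ, Fin.insertNth_apply_same]
        simp [Fin.insertNth_zero']
      calc ‖(MeasurableEquiv.toLp 2 (Fin k → ℝ)).symm.symm w‖
          = Real.sqrt (∑ j : Fin k, w j ^ 2) := hn1
        _ ≤ Real.sqrt (t ^ 2 + ∑ j : Fin k, w j ^ 2) := by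
            apply Real.sqrt_le_sqrt; nlinarith [sq_nonneg t]
        _ ≤ L := by rw [← hn2]; exact h2
  have hvolB : ((volume : Measure (Fin k → ℝ))) B
      = volume (Metric.closedBall (0 : EuclideanSpace ℝ (Fin k)) L) := by
    rw [hB, (MeasurePreserving.symm _ (EuclideanSpace.volume_preserving_symm_measurableEquiv_toLp (Fin k))).measure_preimage
      measurableSet_closedBall.nullMeasurableSet]
  have hvolI : (volume : Measure ℝ) I = ENNReal.ofReal (2 * ε / ‖θ‖) := by
    rw [hI, Real.volume_Icc]
    congr 1
    field_simp
    ring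
  calc volume S = (volume : Measure (ℝ × (Fin k → ℝ)))
        ((MeasurableEquiv.piFinSuccAbove (fun _ : Fin (k+1) => ℝ) 0).symm ⁻¹' A) := by
        rw [step1, step2, step3]
    _ ≤ (volume : Measure (ℝ × (Fin k → ℝ))) (I ×ˢ B) :=
        measure_mono hsub
    _ = (volume : Measure ℝ) I * (volume : Measure (Fin k → ℝ)) B := by
        rw [Measure.volume_eq_prod, Measure.prod_prod]
    _ = ENNReal.ofReal (2 * ε / ‖θ‖)
        * volume (Metric.closedBall (0 : EuclideanSpace ℝ (Fin k)) L) := by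
        rw [hvolI, hvolB]

/-- If `X₁, …, Xₙ` are independent random vectors in `ℝ^d`, each with a density
bounded a.e. by `M` and supported in the closed ball of radius `L`, then the
probability that some pair `i ≠ j` has `|⟨θ*, Xᵢ⟩ - ⟨θ*, Xⱼ⟩| ≤ ε` is at most
`n² M (π^{(d-1)/2}/Γ((d+1)/2)) L^{d-1} ε/‖θ*‖₂`. -/
theorem pairwise_separation_probability_bound
    (d : ℕ) (hd : 1 ≤ d) (L M ε : ℝ) (hL : 0 < L) (hM : 0 < M) (hε : 0 < ε)
    (θstar : EuclideanSpace ℝ (Fin d)) (hθ : θstar ≠ 0)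
    (n : ℕ) (hn : 1 ≤ n)
    {Ω : Type*} [MeasurableSpace Ω] (P : Measure Ω) [IsProbabilityMeasure P]
    (X : Fin n → Ω → EuclideanSpace ℝ (Fin d))
    (hXmeas : ∀ i, Measurable (X i))
    (hindep : ProbabilityTheory.iIndepFun X P)
    (ψ : Fin n → EuclideanSpace ℝ (Fin d) → ℝ≥0∞)
    (hlaw : ∀ i, Measure.map (X i) P
      = (volume : Measure (EuclideanSpace ℝ (Fin d))).withDensity (ψ i))
    (hbound : ∀ i, ∀ᵐ x ∂(volume : Measure (EuclideanSpace ℝ (Fin d))),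
        ψ i x ≤ ENNReal.ofReal M)
    (hsupp : ∀ i, ∀ᵐ x ∂(volume : Measure (EuclideanSpace ℝ (Fin d))),
        ψ i x ≠ 0 → ‖x‖ ≤ L) :
    P {ω | ∃ i j : Fin n, i ≠ j ∧
        |(inner ℝ θstar (X i ω) : ℝ) - (inner ℝ θstar (X j ω) : ℝ)| ≤ ε}
      ≤ ENNReal.ofReal
          ((n : ℝ) ^ 2 * M
            * (Real.pi ^ (((d : ℝ) - 1) / 2) / Real.Gamma (((d : ℝ) + 1) / 2))
            * L ^ (d - 1) * (ε / ‖θstar‖)) := by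
  obtain ⟨k, rfl⟩ : ∃ k, d = k + 1 := ⟨d - 1, (Nat.succ_pred_eq_of_pos hd).symm⟩
  have hθn : (0:ℝ) < ‖θstar‖ := norm_pos_iff.2 hθ
  set Vb := volume (Metric.closedBall (0 : EuclideanSpace ℝ (Fin k)) L) with hVb
  set κ : ℝ≥0∞ := ENNReal.ofReal M * (ENNReal.ofReal (2 * ε / ‖θstar‖) * Vb) with hκ
  set κ₀ : ℝ≥0∞ := ENNReal.ofReal M * (ENNReal.ofReal (ε / ‖θstar‖) * Vb) with hκ₀
  have hprob : ∀ i, IsProbabilityMeasure (Measure.map (X i) P) := fun i =>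
    Measure.isProbabilityMeasure_map (hXmeas i).aemeasurable
  -- density measure bound
  have hdens : ∀ (j : Fin n) (B : Set (EuclideanSpace ℝ (Fin (k+1)))), MeasurableSet B →
      ((volume : Measure (EuclideanSpace ℝ (Fin (k+1)))).withDensity (ψ j)) B
        ≤ ENNReal.ofReal M * volume (B ∩ Metric.closedBall 0 L) := by
    intro j B hBmeas
    rw [withDensity_apply _ hBmeas]
    have hae : ∀ᵐ y ∂(((volume : Measure (EuclideanSpace ℝ (Fin (k+1))))).restrict B),
        ψ j y ≤ (Metric.closedBall (0 : EuclideanSpace ℝ (Fin (k+1))) L).indicator (fun _ => ENNReal.ofReal M) y := by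
      refine ae_restrict_of_ae ?_
      filter_upwards [hbound j, hsupp j] with y h1 h2
      by_cases h0 : ψ j y = 0
      · simp [h0]
      · have hy : y ∈ Metric.closedBall (0 : EuclideanSpace ℝ (Fin (k+1))) L := by
          simpa [Metric.mem_closedBall, dist_zero_right] using h2 h0
        rw [Set.indicator_of_mem hy]; exact h1
    calc ∫⁻ y in B, ψ j y ∂(volume : Measure (EuclideanSpace ℝ (Fin (k+1))))
        ≤ ∫⁻ y in B, (Metric.closedBall (0 : EuclideanSpace ℝ (Fin (k+1))) L).indicator (fun _ => ENNReal.ofReal M) y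
            ∂(volume : Measure (EuclideanSpace ℝ (Fin (k+1)))) := lintegral_mono_ae hae
      _ = ENNReal.ofReal M * ((volume : Measure (EuclideanSpace ℝ (Fin (k+1)))).restrict B) (Metric.closedBall (0 : EuclideanSpace ℝ (Fin (k+1))) L) := by
          rw [lintegral_indicator measurableSet_closedBall, setLIntegral_const]
      _ = ENNReal.ofReal M * volume (B ∩ Metric.closedBall 0 L) := by
          rw [Measure.restrict_apply measurableSet_closedBall, Set.inter_comm]
  -- per-pair bound
  set T : Set (EuclideanSpace ℝ (Fin (k+1)) × EuclideanSpace ℝ (Fin (k+1))) :=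
    {p : EuclideanSpace ℝ (Fin (k+1)) × EuclideanSpace ℝ (Fin (k+1)) | |(inner ℝ θstar p.1 : ℝ) - (inner ℝ θstar p.2 : ℝ)| ≤ ε} with hT
  have hTmeas : MeasurableSet T := by
    refine measurableSet_le ?_ measurable_const
    exact (((continuous_const.inner (continuous_fst : Continuous (Prod.fst : EuclideanSpace ℝ (Fin (k+1)) × EuclideanSpace ℝ (Fin (k+1)) → EuclideanSpace ℝ (Fin (k+1))))).sub
      (continuous_const.inner continuous_snd)).abs).measurable
  have hpair : ∀ i j : Fin n, i ≠ j →
      P {ω | |(inner ℝ θstar (X i ω) : ℝ) - (inner ℝ θstar (X j ω) : ℝ)| ≤ ε} ≤ κ := by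
    intro i j hij
    have hind : (Measure.map (fun ω => (X i ω, X j ω)) P)
        = (Measure.map (X i) P).prod (Measure.map (X j) P) :=
      (ProbabilityTheory.indepFun_iff_map_prod_eq_prod_map_map
        (hXmeas i).aemeasurable (hXmeas j).aemeasurable).1 (hindep.indepFun hij)
    have hset : {ω | |(inner ℝ θstar (X i ω) : ℝ) - (inner ℝ θstar (X j ω) : ℝ)| ≤ ε}
        = (fun ω => (X i ω, X j ω)) ⁻¹' T := rfl
    rw [hset, ← Measure.map_apply ((hXmeas i).prodMk (hXmeas j)) hTmeas, hind,
      Measure.prod_apply hTmeas]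
    have hslice : ∀ x : EuclideanSpace ℝ (Fin (k+1)), (Measure.map (X j) P) (Prod.mk x ⁻¹' T) ≤ κ := by
      intro x
      rw [hlaw j]
      have hsmeas : MeasurableSet (Prod.mk x ⁻¹' T) :=
        hTmeas.preimage measurable_prodMk_left
      refine le_trans (hdens j _ hsmeas) ?_
      have heq : (Prod.mk x ⁻¹' T) ∩ Metric.closedBall 0 L
          = {y : EuclideanSpace ℝ (Fin (k+1)) | |(inner ℝ θstar y : ℝ) - (inner ℝ θstar x : ℝ)| ≤ ε ∧ ‖y‖ ≤ L} := by
        ext y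
        simp only [hT, Set.mem_inter_iff, Set.mem_preimage, Set.mem_setOf_eq,
          Metric.mem_closedBall, dist_zero_right]
        rw [abs_sub_comm]
      rw [hκ, heq]
      exact mul_le_mul_right (slab_vol k θstar hθ (inner ℝ θstar x) ε L) _
    calc ∫⁻ x, (Measure.map (X j) P) (Prod.mk x ⁻¹' T) ∂(Measure.map (X i) P)
        ≤ ∫⁻ _, κ ∂(Measure.map (X i) P) := lintegral_mono hslice
      _ = κ := by
          haveI := hprob i
          rw [lintegral_const, measure_univ, mul_one]
  -- covering by ordered pairs
  set C : Fin n → Fin n → Set Ω := fun i j =>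
    {ω | i < j ∧ |(inner ℝ θstar (X i ω) : ℝ) - (inner ℝ θstar (X j ω) : ℝ)| ≤ ε} with hC
  have hcover : {ω | ∃ i j : Fin n, i ≠ j ∧
      |(inner ℝ θstar (X i ω) : ℝ) - (inner ℝ θstar (X j ω) : ℝ)| ≤ ε}
      ⊆ ⋃ i, ⋃ j, C i j := by
    rintro ω ⟨i, j, hij, habs⟩
    rcases lt_or_gt_of_ne hij with h | h
    · exact Set.mem_iUnion.2 ⟨i, Set.mem_iUnion.2 ⟨j, ⟨h, habs⟩⟩⟩
    · exact Set.mem_iUnion.2 ⟨j, Set.mem_iUnion.2 ⟨i, ⟨h, by rwa [abs_sub_comm]⟩⟩⟩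
  have hCbound : ∀ i j : Fin n, P (C i j) ≤ if i < j then κ else 0 := by
    intro i j
    by_cases h : i < j
    · simp only [h, if_true]
      have : C i j = {ω | |(inner ℝ θstar (X i ω) : ℝ) - (inner ℝ θstar (X j ω) : ℝ)| ≤ ε} := by
        ext ω; simp [hC, h]
      rw [this]
      exact hpair i j h.ne
    · simp only [h, if_false]
      have : C i j = ∅ := by ext ω; simp [hC, h]
      simp [this]
  have hsum : P {ω | ∃ i j : Fin n, i ≠ j ∧
      |(inner ℝ θstar (X i ω) : ℝ) - (inner ℝ θstar (X j ω) : ℝ)| ≤ ε}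
      ≤ ∑ i : Fin n, ∑ j : Fin n, (if i < j then κ else 0) := by
    calc P _ ≤ P (⋃ i, ⋃ j, C i j) := measure_mono hcover
      _ ≤ ∑' i : Fin n, P (⋃ j, C i j) := measure_iUnion_le _
      _ ≤ ∑' i : Fin n, ∑' j : Fin n, P (C i j) :=
          ENNReal.tsum_le_tsum fun i => measure_iUnion_le _
      _ = ∑ i : Fin n, ∑ j : Fin n, P (C i j) := by
          rw [tsum_fintype]
          exact Finset.sum_congr rfl fun i _ => tsum_fintype _
      _ ≤ ∑ i : Fin n, ∑ j : Fin n, (if i < j then κ else 0) :=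
          Finset.sum_le_sum fun i _ => Finset.sum_le_sum fun j _ => hCbound i j
  -- doubling
  set S := ∑ i : Fin n, ∑ j : Fin n, (if i < j then κ else 0) with hSdef
  have hdouble : S + S ≤ (n : ℝ≥0∞) * n * κ := by
    have hswap : (∑ i : Fin n, ∑ j : Fin n, if i < j then κ else 0)
        = ∑ i : Fin n, ∑ j : Fin n, (if j < i then κ else 0) := Finset.sum_comm
    calc S + S = (∑ i : Fin n, ∑ j : Fin n, if i < j then κ else 0)
          + ∑ i : Fin n, ∑ j : Fin n, (if j < i then κ else 0) := by
          rw [hSdef]; nth_rewrite 2 [hswap]; rfl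
      _ = ∑ i : Fin n, ∑ j : Fin n,
          ((if i < j then κ else 0) + (if j < i then κ else 0)) := by
          rw [← Finset.sum_add_distrib]
          exact Finset.sum_congr rfl fun i _ => (Finset.sum_add_distrib).symm
      _ ≤ ∑ i : Fin n, ∑ j : Fin n, κ := by
          refine Finset.sum_le_sum fun i _ => Finset.sum_le_sum fun j _ => ?_
          rcases lt_trichotomy i j with h | h | h
          · simp [h, not_lt_of_gt h]
          · simp [h]
          · simp [h, not_lt_of_gt h]
      _ = (n : ℝ≥0∞) * n * κ := by
          rw [Finset.sum_const, Finset.sum_const, Finset.card_univ, Fintype.card_fin,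
            smul_smul, nsmul_eq_mul]
          push_cast
          ring
  have hκ2 : κ = 2 * κ₀ := by
    rw [hκ, hκ₀, show (2:ℝ) * ε / ‖θstar‖ = 2 * (ε / ‖θstar‖) by ring,
      ENNReal.ofReal_mul (by norm_num : (0:ℝ) ≤ 2), ENNReal.ofReal_ofNat]
    ring
  have hS : S ≤ (n : ℝ≥0∞) * n * κ₀ := by
    have h2 : 2 * S ≤ 2 * ((n : ℝ≥0∞) * n * κ₀) := by
      calc 2 * S = S + S := two_mul S
        _ ≤ (n : ℝ≥0∞) * n * κ := hdouble
        _ = 2 * ((n : ℝ≥0∞) * n * κ₀) := by rw [hκ2]; ring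
    exact (ENNReal.mul_le_mul_iff_right (by norm_num) (by norm_num)).1 h2
  -- final computation
  have hVb' : Vb = ENNReal.ofReal (L ^ k * (Real.sqrt Real.pi ^ k / Real.Gamma ((k:ℝ)/2 + 1))) := by
    rcases Nat.eq_zero_or_pos k with hk | hk
    · subst hk
      rw [hVb, volume_euclideanSpace_eq_dirac,
        Measure.dirac_apply_of_mem (Metric.mem_closedBall_self hL.le)]
      norm_num [Real.Gamma_one]
    · haveI : Nonempty (Fin k) := ⟨⟨0, hk⟩⟩
      rw [hVb, EuclideanSpace.volume_closedBall]
      simp only [Fintype.card_fin]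
      rw [← ENNReal.ofReal_pow hL.le, ← ENNReal.ofReal_mul (pow_nonneg hL.le k)]
  have hfinal : (n : ℝ≥0∞) * n * κ₀ ≤ ENNReal.ofReal
      ((n : ℝ) ^ 2 * M
        * (Real.pi ^ ((((k+1:ℕ) : ℝ) - 1) / 2) / Real.Gamma ((((k+1:ℕ) : ℝ) + 1) / 2))
        * L ^ (k + 1 - 1) * (ε / ‖θstar‖)) := by
    rw [hκ₀, hVb']
    rw [← ENNReal.ofReal_natCast n]
    rw [← ENNReal.ofReal_mul (by positivity), ← ENNReal.ofReal_mul (by positivity),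
      ← ENNReal.ofReal_mul (by positivity), ← ENNReal.ofReal_mul (by positivity)]
    apply ENNReal.ofReal_le_ofReal
    have hsqrtpow : Real.sqrt Real.pi ^ k = Real.pi ^ ((k:ℝ)/2) := by
      rw [Real.sqrt_eq_rpow, ← Real.rpow_natCast (Real.pi ^ ((1:ℝ)/2)) k,
        ← Real.rpow_mul Real.pi_pos.le]
      congr 1
      ring
    have h1 : (((k+1:ℕ) : ℝ) - 1) / 2 = (k:ℝ)/2 := by push_cast; ring
    have h2 : (((k+1:ℕ) : ℝ) + 1) / 2 = (k:ℝ)/2 + 1 := by push_cast; ring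
    rw [h1, h2, hsqrtpow, Nat.add_sub_cancel]
    ring_nf
    exact le_refl _
  exact hsum.trans (hS.trans hfinal)
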